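/- Let N : Ω → ℝⁿ be a C¹ unitary vector field with symmetric Jacobian on an open set Ω ⊂ ℝⁿ, and let U = Σⱼ Uⱼ eʲ be a C¹ vector field on Ω. Write U⁰ⱼ = Uⱼ − ⟨N,U⟩Nⱼ (j ≤ n) and U⁰ₙ₊₁ = ⟨N,U⟩. Then the classical divergence satisfies Σⱼ₌₁ⁿ ∂ⱼUⱼ = Σⱼ₌₁ⁿ 𝒟ⱼU⁰ⱼ + ∂_N U⁰ₙ₊₁ + ℋ⁰ ⟨N,U⟩, where ℋ⁰ := Σⱼ₌₁ⁿ ∂ⱼNⱼ and 𝒟ⱼ := ∂ⱼ − Nⱼ∂_N. -/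

import Mathlib

/-- The extended Günter derivative `𝒟ⱼφ = ∂ⱼφ − Nⱼ ∂_N φ` as a function. -/
noncomputable def gunterD (n : ℕ)
    (N : EuclideanSpace ℝ (Fin n) → EuclideanSpace ℝ (Fin n)) (j : Fin n)
    (φ : EuclideanSpace ℝ (Fin n) → ℝ) : EuclideanSpace ℝ (Fin n) → ℝ :=
  fun x => fderiv ℝ φ x (EuclideanSpace.single j 1)
    - N x j * ∑ m : Fin n, N x m * fderiv ℝ φ x (EuclideanSpace.single m 1)

/-- The normal derivative `∂_N φ = Σₘ Nₘ ∂ₘφ` as a function. -/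
noncomputable def normalD (n : ℕ)
    (N : EuclideanSpace ℝ (Fin n) → EuclideanSpace ℝ (Fin n))
    (φ : EuclideanSpace ℝ (Fin n) → ℝ) : EuclideanSpace ℝ (Fin n) → ℝ :=
  fun x => ∑ m : Fin n, N x m * fderiv ℝ φ x (EuclideanSpace.single m 1)

/-- fderiv of a coordinate of a vector field. -/
theorem aux_fderiv_proj {n : ℕ} (F : EuclideanSpace ℝ (Fin n) → EuclideanSpace ℝ (Fin n))
    (x : EuclideanSpace ℝ (Fin n)) (hF : DifferentiableAt ℝ F x) (j : Fin n) :
    fderiv ℝ (fun y => F y j) x = (EuclideanSpace.proj j).comp (fderiv ℝ F x) := by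
  have h := ((EuclideanSpace.proj (𝕜 := ℝ) j).hasFDerivAt.comp x hF.hasFDerivAt).fderiv
  exact h

theorem aux_diff_proj {n : ℕ} (F : EuclideanSpace ℝ (Fin n) → EuclideanSpace ℝ (Fin n))
    (x : EuclideanSpace ℝ (Fin n)) (hF : DifferentiableAt ℝ F x) (j : Fin n) :
    DifferentiableAt ℝ (fun y => F y j) x :=
  ((EuclideanSpace.proj (𝕜 := ℝ) j).differentiableAt.comp x hF : _)

/-- The purely algebraic identity behind the divergence formula. -/
theorem aux_alg_lemma (n : ℕ) (a b : Fin n → ℝ) (P Q : Fin n → Fin n → ℝ)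
    (hC0 : ∑ m, a m * a m = 1)
    (hC1 : ∀ v, ∑ m, a m * P m v = 0)
    (hsymP : ∀ j v, P j v = P v j) :
    ∑ j, Q j j
      = (∑ j, ((Q j j - ((∑ m, a m * b m) * P j j + a j * (∑ m, (P m j * b m + a m * Q m j))))
          - a j * ∑ m, a m * (Q j m - ((∑ m', a m' * b m') * P j m
              + a j * (∑ m', (P m' m * b m' + a m' * Q m' m))))))
        + (∑ m, a m * (∑ m', (P m' m * b m' + a m' * Q m' m)))
        + (∑ j, P j j) * (∑ m, a m * b m) := by
  set F := ∑ m, a m * b m with hF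
  set D : Fin n → ℝ := fun v => ∑ m', (P m' v * b m' + a m' * Q m' v) with hD
  have hC1' : ∀ v, ∑ m, a m * P v m = 0 := by
    intro v
    calc ∑ m, a m * P v m = ∑ m, a m * P m v := by
          exact Finset.sum_congr rfl fun m _ => by rw [hsymP]
      _ = 0 := hC1 v
  have haD : ∑ j, a j * D j = ∑ j, a j * ∑ m, a m * Q m j := by
    simp only [hD]
    rw [← sub_eq_zero]
    have : ∀ j, a j * ∑ m', (P m' j * b m' + a m' * Q m' j)
        = a j * (∑ m', P m' j * b m') + a j * ∑ m', a m' * Q m' j := by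
      intro j; rw [Finset.sum_add_distrib, mul_add]
    calc (∑ j, a j * ∑ m', (P m' j * b m' + a m' * Q m' j)) - ∑ j, a j * ∑ m, a m * Q m j
        = ∑ j, a j * (∑ m', P m' j * b m') := by
          simp only [this]; rw [Finset.sum_add_distrib]; ring
      _ = ∑ j, ∑ m', b m' * (a j * P m' j) := by
          refine Finset.sum_congr rfl fun j _ => ?_
          rw [Finset.mul_sum]; exact Finset.sum_congr rfl fun m _ => by ring
      _ = ∑ m', ∑ j, b m' * (a j * P m' j) := Finset.sum_comm
      _ = ∑ m', b m' * ∑ j, a j * P m' j := by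
          refine Finset.sum_congr rfl fun m _ => ?_; rw [Finset.mul_sum]
      _ = 0 := by simp [hC1']
  have hinner : ∀ j, (∑ m, a m * (Q j m - (F * P j m + a j * D m)))
      = (∑ m, a m * Q j m) - a j * ∑ m, a m * D m := by
    intro j
    have : ∀ m, a m * (Q j m - (F * P j m + a j * D m))
        = a m * Q j m - F * (a m * P j m) - a j * (a m * D m) := fun m => by ring
    simp only [this]
    rw [Finset.sum_sub_distrib, Finset.sum_sub_distrib, ← Finset.mul_sum, ← Finset.mul_sum,
      hC1' j, mul_zero, sub_zero]
  have hswap : ∑ j, a j * ∑ m, a m * Q j m = ∑ j, a j * ∑ m, a m * Q m j := by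
    calc ∑ j, a j * ∑ m, a m * Q j m = ∑ j, ∑ m, a j * (a m * Q j m) := by
          refine Finset.sum_congr rfl fun j _ => ?_; rw [Finset.mul_sum]
      _ = ∑ m, ∑ j, a j * (a m * Q j m) := Finset.sum_comm
      _ = ∑ m, a m * ∑ j, a j * Q j m := by
          refine Finset.sum_congr rfl fun m _ => ?_
          rw [Finset.mul_sum]; exact Finset.sum_congr rfl fun j _ => by ring
      _ = ∑ j, a j * ∑ m, a m * Q m j := rfl
  have houter : ∑ j, a j * ∑ m, a m * (Q j m - (F * P j m + a j * D m))
      = (∑ j, a j * ∑ m, a m * Q m j) - ∑ m, a m * D m := by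
    simp only [hinner]
    have : ∀ j, a j * ((∑ m, a m * Q j m) - a j * ∑ m, a m * D m)
        = a j * (∑ m, a m * Q j m) - a j * a j * ∑ m, a m * D m := fun j => by ring
    simp only [this]
    rw [Finset.sum_sub_distrib, hswap, ← Finset.sum_mul, hC0, one_mul]
  have hfirst : ∑ j, (Q j j - (F * P j j + a j * D j))
      = (∑ j, Q j j) - F * (∑ j, P j j) - ∑ j, a j * D j := by
    have : ∀ j, Q j j - (F * P j j + a j * D j)
        = Q j j - F * P j j - a j * D j := fun j => by ring
    simp only [this]
    rw [Finset.sum_sub_distrib, Finset.sum_sub_distrib, ← Finset.mul_sum]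
  rw [Finset.sum_sub_distrib, hfirst, houter, haD]
  ring

/-- the classical divergence written in the extended coordinates:
`Σⱼ ∂ⱼUⱼ = Σⱼ 𝒟ⱼU⁰ⱼ + ∂_N U⁰ₙ₊₁ + ℋ⁰ ⟨N,U⟩` with `ℋ⁰ = Σⱼ ∂ⱼNⱼ`. -/
theorem divergence_in_extended_coordinates
    (n : ℕ) (Ω : Set (EuclideanSpace ℝ (Fin n))) (hΩ : IsOpen Ω)
    (N U : EuclideanSpace ℝ (Fin n) → EuclideanSpace ℝ (Fin n))
    (hNC1 : ContDiffOn ℝ 1 N Ω) (hUC1 : ContDiffOn ℝ 1 U Ω)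
    (hdiffN : ∀ x ∈ Ω, DifferentiableAt ℝ N x)
    (hdiffU : ∀ x ∈ Ω, DifferentiableAt ℝ U x)
    (hunit : ∀ x ∈ Ω, ‖N x‖ = 1)
    (hsym : ∀ x ∈ Ω, ∀ j k : Fin n,
      fderiv ℝ N x (EuclideanSpace.single j 1) k = fderiv ℝ N x (EuclideanSpace.single k 1) j) :
    ∀ x ∈ Ω,
      ∑ j : Fin n, fderiv ℝ U x (EuclideanSpace.single j 1) j
        = (∑ j : Fin n,
            gunterD n N j (fun y => U y j - (∑ m : Fin n, N y m * U y m) * N y j) x)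
          + normalD n N (fun y => ∑ m : Fin n, N y m * U y m) x
          + (∑ j : Fin n, fderiv ℝ N x (EuclideanSpace.single j 1) j)
            * (∑ m : Fin n, N x m * U x m) := by
  intro x hx
  have hNd := hdiffN x hx
  have hUd := hdiffU x hx
  have hNjd : ∀ j, DifferentiableAt ℝ (fun y => N y j) x := aux_diff_proj N x hNd
  have hUjd : ∀ j, DifferentiableAt ℝ (fun y => U y j) x := aux_diff_proj U x hUd
  have hNval : ∀ j v, fderiv ℝ (fun y => N y j) x v = fderiv ℝ N x v j := by
    intro j v; rw [aux_fderiv_proj N x hNd j]; rfl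
  have hUval : ∀ j v, fderiv ℝ (fun y => U y j) x v = fderiv ℝ U x v j := by
    intro j v; rw [aux_fderiv_proj U x hUd j]; rfl
  have hfd : DifferentiableAt ℝ (fun y => ∑ m : Fin n, N y m * U y m) x :=
    DifferentiableAt.fun_sum fun m _ => (hNjd m).mul (hUjd m)
  have hfval : ∀ v, fderiv ℝ (fun y => ∑ m : Fin n, N y m * U y m) x v
      = ∑ m, (fderiv ℝ N x v m * U x m + N x m * fderiv ℝ U x v m) := by
    intro v
    rw [fderiv_fun_sum fun m _ => (show DifferentiableAt ℝ (fun y => N y m * U y m) x from (hNjd m).mul (hUjd m)), ContinuousLinearMap.sum_apply]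
    refine Finset.sum_congr rfl fun m _ => ?_
    rw [fderiv_fun_mul (hNjd m) (hUjd m)]
    simp only [ContinuousLinearMap.add_apply, ContinuousLinearMap.coe_smul',
      Pi.smul_apply, smul_eq_mul, hNval, hUval]
    ring
  have hφval : ∀ (j : Fin n) (v),
      fderiv ℝ (fun y => U y j - (∑ m : Fin n, N y m * U y m) * N y j) x v
      = fderiv ℝ U x v j - ((∑ m, N x m * U x m) * fderiv ℝ N x v j
          + N x j * ∑ m, (fderiv ℝ N x v m * U x m + N x m * fderiv ℝ U x v m)) := by
    intro j v
    rw [fderiv_fun_sub (hUjd j) (show DifferentiableAt ℝ (fun y => (∑ m : Fin n, N y m * U y m) * N y j) x from hfd.mul (hNjd j)), ContinuousLinearMap.sub_apply,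
      fderiv_fun_mul hfd (hNjd j)]
    simp only [ContinuousLinearMap.add_apply, ContinuousLinearMap.coe_smul',
      Pi.smul_apply, smul_eq_mul, hNval, hUval, hfval]
  -- unit norm facts
  have hC0 : ∑ m, N x m * N x m = 1 := by
    have h1 := hunit x hx
    have : ∑ m, N x m * N x m = ‖N x‖ ^ 2 := by
      rw [EuclideanSpace.norm_eq, Real.sq_sqrt (Finset.sum_nonneg fun i _ => sq_nonneg _)]; simp only [Real.norm_eq_abs, sq, abs_mul_abs_self]
    rw [this, h1]; norm_num
  have hC1 : ∀ v, ∑ m, N x m * fderiv ℝ N x v m = 0 := by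
    intro v
    have hgd : ∀ m : Fin n, DifferentiableAt ℝ (fun y => N y m * N y m) x :=
      fun m => (hNjd m).mul (hNjd m)
    have hev : (fun y => ∑ m : Fin n, N y m * N y m) =ᶠ[nhds x] (fun _ => (1:ℝ)) := by
      filter_upwards [hΩ.mem_nhds hx] with y hy
      have h1 := hunit y hy
      have : ∑ m, N y m * N y m = ‖N y‖ ^ 2 := by
        rw [EuclideanSpace.norm_eq, Real.sq_sqrt (Finset.sum_nonneg fun i _ => sq_nonneg _)]; simp only [Real.norm_eq_abs, sq, abs_mul_abs_self]
      rw [this, h1]; norm_num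
    have hzero : fderiv ℝ (fun y => ∑ m : Fin n, N y m * N y m) x = 0 := by
      rw [hev.fderiv_eq]; exact fderiv_const_apply 1
    have hval : fderiv ℝ (fun y => ∑ m : Fin n, N y m * N y m) x v
        = ∑ m, (fderiv ℝ N x v m * N x m + N x m * fderiv ℝ N x v m) := by
      rw [fderiv_fun_sum fun m _ => hgd m, ContinuousLinearMap.sum_apply]
      refine Finset.sum_congr rfl fun m _ => ?_
      rw [fderiv_fun_mul (hNjd m) (hNjd m)]
      simp only [ContinuousLinearMap.add_apply, ContinuousLinearMap.coe_smul',
        Pi.smul_apply, smul_eq_mul, hNval]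
      ring
    have h2 : ∑ m, (fderiv ℝ N x v m * N x m + N x m * fderiv ℝ N x v m) = 0 := by
      rw [← hval, hzero]; rfl
    have h3 : ∀ m : Fin n, fderiv ℝ N x v m * N x m + N x m * fderiv ℝ N x v m
        = 2 * (N x m * fderiv ℝ N x v m) := fun m => by ring
    rw [Finset.sum_congr rfl fun m _ => h3 m, ← Finset.mul_sum] at h2
    linarith
  simp only [gunterD, normalD, hφval, hfval]
  exact aux_alg_lemma n (fun j => N x j) (fun j => U x j)
    (fun j v => fderiv ℝ N x (EuclideanSpace.single v 1) j)
    (fun j v => fderiv ℝ U x (EuclideanSpace.single v 1) j)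
    hC0 (fun v => hC1 (EuclideanSpace.single v 1))
    (fun j v => hsym x hx v j)
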